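/- Let p be prime and f : (ZMod p)^n → ℝ/ℤ a nonclassical polynomial of degree d with values on {0,1}^n in (1/p^k)ℤ/ℤ, such that f(0^n) = 0. If n > (p^k − 1)·d, then there exists a nonzero x ∈ {0,1}^n with f(x) = 0. -/

import Mathlib

open Finset

/-- Additive directional derivative `D_h f(x) = f(x+h) - f(x)`. -/
noncomputable def D {V M : Type*} [Add V] [AddCommGroup M] (h : V) (f : V → M) : V → M :=
  fun x => f (x + h) - f x

/-- `f` is a nonclassical polynomial of degree at most `d`:
all `(d+1)`-fold iterated derivatives vanish identically. -/
def IsNCPoly {V M : Type*} [Add V] [AddCommGroup M] (d : ℕ) (f : V → M) : Prop :=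
  ∀ hs : List V, hs.length = d + 1 → hs.foldr D f = 0

/-- `e(t) = exp(2πit)` on the torus `ℝ/ℤ`. -/
noncomputable def e : AddCircle (1 : ℝ) → ℂ :=
  Function.Periodic.lift (f := fun t : ℝ => Complex.exp (2 * (Real.pi : ℂ) * Complex.I * (t : ℂ)))
    (by
      intro t
      dsimp only
      rw [Complex.ofReal_add, Complex.ofReal_one, mul_add, mul_one, Complex.exp_add,
        Complex.exp_two_pi_mul_I, mul_one])

/-- `x` is a Boolean point: all coordinates are `0` or `1`. -/
def IsBool {n : ℕ} {R : Type*} [Zero R] [One R] (x : Fin n → R) : Prop :=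
  ∀ i, x i = 0 ∨ x i = 1

namespace Stmt13Aux

variable {n : ℕ}

/-- Möbius / inclusion–exclusion coefficient of a function on the Boolean cube. -/
def mob {M : Type*} [AddCommGroup M] (G : Finset (Fin n) → M) (T : Finset (Fin n)) : M :=
  ∑ U ∈ T.powerset, (-1 : ℤ) ^ (T.card - U.card) • G U

lemma mob_def {M : Type*} [AddCommGroup M] (G : Finset (Fin n) → M) (T : Finset (Fin n)) :
    mob G T = ∑ U ∈ T.powerset, (-1 : ℤ) ^ (T.card - U.card) • G U := rfl

lemma mob_empty {M : Type*} [AddCommGroup M] (G : Finset (Fin n) → M) : mob G ∅ = G ∅ := by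
  simp [mob]

lemma mob_congr {M : Type*} [AddCommGroup M] {G G' : Finset (Fin n) → M} {T : Finset (Fin n)}
    (h : ∀ U ∈ T.powerset, G U = G' U) : mob G T = mob G' T :=
  Finset.sum_congr rfl fun U hU => by rw [h U hU]

lemma mob_insert {M : Type*} [AddCommGroup M] (G : Finset (Fin n) → M)
    {a : Fin n} {T : Finset (Fin n)} (ha : a ∉ T) :
    mob G (insert a T) = mob (fun U => G (insert a U) - G U) T := by
  classical
  have hdisj : Disjoint T.powerset (T.powerset.image (insert a)) := by
    rw [Finset.disjoint_left]
    rintro U hU hU'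
    rcases Finset.mem_image.mp hU' with ⟨V, hV, rfl⟩
    exact ha (Finset.mem_powerset.mp hU (Finset.mem_insert_self a V))
  have hinj : ∀ U ∈ T.powerset, ∀ V ∈ T.powerset, insert a U = insert a V → U = V := by
    intro U hU V hV hUV
    have haU : a ∉ U := fun h => ha (Finset.mem_powerset.mp hU h)
    have haV : a ∉ V := fun h => ha (Finset.mem_powerset.mp hV h)
    rw [← Finset.erase_insert haU, hUV, Finset.erase_insert haV]
  unfold mob
  rw [Finset.powerset_insert, Finset.sum_union hdisj, Finset.sum_image hinj]
  have h1 : ∀ U ∈ T.powerset,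
      (-1 : ℤ) ^ ((insert a T).card - U.card) • G U
        = -((-1 : ℤ) ^ (T.card - U.card) • G U) := by
    intro U hU
    have hle : U.card ≤ T.card := Finset.card_le_card (Finset.mem_powerset.mp hU)
    rw [Finset.card_insert_of_notMem ha, Nat.succ_sub hle, pow_succ, mul_comm, neg_one_mul,
      neg_smul]
  have h2 : ∀ U ∈ T.powerset,
      (-1 : ℤ) ^ ((insert a T).card - (insert a U).card) • G (insert a U)
        = (-1 : ℤ) ^ (T.card - U.card) • G (insert a U) := by
    intro U hU
    have haU : a ∉ U := fun h => ha (Finset.mem_powerset.mp hU h)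
    rw [Finset.card_insert_of_notMem ha, Finset.card_insert_of_notMem haU,
      Nat.succ_sub_succ]
  rw [Finset.sum_congr rfl h1, Finset.sum_congr rfl h2]
  simp only [smul_sub, Finset.sum_sub_distrib, Finset.sum_neg_distrib]
  abel

lemma mob_sum {M : Type*} [AddCommGroup M] (S : Finset (Fin n)) :
    ∀ G : Finset (Fin n) → M, ∑ T ∈ S.powerset, mob G T = G S := by
  classical
  induction S using Finset.induction_on with
  | empty =>
    intro G
    simp [mob]
  | insert a S ha ih =>
    intro G
    have hdisj : Disjoint S.powerset (S.powerset.image (insert a)) := by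
      rw [Finset.disjoint_left]
      rintro U hU hU'
      rcases Finset.mem_image.mp hU' with ⟨V, hV, rfl⟩
      exact ha (Finset.mem_powerset.mp hU (Finset.mem_insert_self a V))
    have hinj : ∀ U ∈ S.powerset, ∀ V ∈ S.powerset, insert a U = insert a V → U = V := by
      intro U hU V hV hUV
      have haU : a ∉ U := fun h => ha (Finset.mem_powerset.mp hU h)
      have haV : a ∉ V := fun h => ha (Finset.mem_powerset.mp hV h)
      rw [← Finset.erase_insert haU, hUV, Finset.erase_insert haV]
    rw [Finset.powerset_insert, Finset.sum_union hdisj, Finset.sum_image hinj, ih G]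
    have h3 : ∀ T ∈ S.powerset, mob G (insert a T) = mob (fun U => G (insert a U) - G U) T := by
      intro T hT
      exact mob_insert G (fun h => ha (Finset.mem_powerset.mp hT h))
    rw [Finset.sum_congr rfl h3, ih (fun U => G (insert a U) - G U)]
    abel

/-- Boolean characteristic vector of a finite set. -/
def bvec (p : ℕ) (S : Finset (Fin n)) : Fin n → ZMod p := fun i => if i ∈ S then 1 else 0

lemma bvec_empty (p : ℕ) : bvec p (∅ : Finset (Fin n)) = 0 := by
  funext i; simp [bvec]

lemma bvec_insert (p : ℕ) {a : Fin n} {U : Finset (Fin n)} (ha : a ∉ U) :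
    bvec p (insert a U) = bvec p U + bvec p {a} := by
  funext i
  by_cases h : i = a
  · subst h
    simp [bvec, ha]
  · simp [bvec, h, Finset.mem_insert]

lemma isBool_bvec (p : ℕ) (S : Finset (Fin n)) : IsBool (bvec p S) := by
  intro i
  by_cases h : i ∈ S <;> simp [bvec, h]

lemma foldr_eq_zero_of_le {V M : Type*} [Add V] [AddCommGroup M] {d : ℕ} {f : V → M}
    (h : IsNCPoly d f) : ∀ m, d + 1 ≤ m → ∀ hs : List V, hs.length = m → hs.foldr D f = 0 := by
  intro m
  induction m with
  | zero => intro h0; omega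
  | succ m ih =>
    intro hm hs hlen
    rcases Nat.lt_or_ge (d + 1) (m + 1) with hlt | hge
    · match hs with
      | [] => simp at hlen
      | h₀ :: t =>
        have ht : t.foldr D f = 0 := ih (by omega) t (by simpa using hlen)
        show D h₀ (t.foldr D f) = 0
        rw [ht]
        funext x
        simp [D]
    · have : m + 1 = d + 1 := by omega
      exact h hs (by omega)

/-- Iterated discrete derivatives along unit cube directions compute Möbius coefficients. -/
lemma mob_comp_bvec_eq_zero {p : ℕ} {M : Type*} [AddCommGroup M] (T : Finset (Fin n)) :
    ∀ g : (Fin n → ZMod p) → M,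
      (∀ hs : List (Fin n → ZMod p), hs.length = T.card → hs.foldr D g = 0) →
      mob (fun U => g (bvec p U)) T = 0 := by
  classical
  induction T using Finset.induction_on with
  | empty =>
    intro g hg
    have h0 : g = 0 := hg [] rfl
    rw [mob_empty]
    rw [h0]
    rfl
  | insert a T ha ih =>
    intro g hg
    rw [mob_insert _ ha]
    have hcong : ∀ U ∈ T.powerset,
        g (bvec p (insert a U)) - g (bvec p U) = (D (bvec p {a}) g) (bvec p U) := by
      intro U hU
      have haU : a ∉ U := fun h => ha (Finset.mem_powerset.mp hU h)
      rw [bvec_insert p haU]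
      rfl
    rw [mob_congr hcong]
    apply ih
    intro hs hlen
    have := hg (hs ++ [bvec p {a}]) (by
      simp [hlen, Finset.card_insert_of_notMem ha])
    rwa [List.foldr_append] at this

variable (p : ℕ)

/-- Monomial indicator function on the cube. -/
def mono (T : Finset (Fin n)) : Finset (Fin n) → ZMod p := fun U => if T ⊆ U then 1 else 0

/-- Functions spanned by monomials of degree at most `Dg`. -/
def Sp (Dg : ℕ) : Submodule (ZMod p) (Finset (Fin n) → ZMod p) :=
  Submodule.span (ZMod p) {g | ∃ T : Finset (Fin n), T.card ≤ Dg ∧ g = mono p T}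

lemma mono_mem {T : Finset (Fin n)} {Dg : ℕ} (h : T.card ≤ Dg) : mono p T ∈ Sp p Dg :=
  Submodule.subset_span ⟨T, h, rfl⟩

lemma Sp_mono {Dg Eg : ℕ} (h : Dg ≤ Eg) :
    (Sp p Dg : Submodule (ZMod p) (Finset (Fin n) → ZMod p)) ≤ Sp p Eg :=
  Submodule.span_mono (by rintro g ⟨T, hT, rfl⟩; exact ⟨T, hT.trans h, rfl⟩)

lemma mono_empty : mono p (∅ : Finset (Fin n)) = 1 := by
  funext U; simp [mono]

lemma one_mem_Sp (Dg : ℕ) : (1 : Finset (Fin n) → ZMod p) ∈ Sp p Dg := by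
  rw [← mono_empty p]
  exact mono_mem p (by simp)

lemma mono_mul_mono (T T' : Finset (Fin n)) : mono p T * mono p T' = mono p (T ∪ T') := by
  funext U
  by_cases h : T ⊆ U <;> by_cases h' : T' ⊆ U <;>
    simp [mono, h, h', Finset.union_subset_iff]

lemma mul_mem_Sp {Dg Eg : ℕ} {g h : Finset (Fin n) → ZMod p}
    (hg : g ∈ Sp p Dg) (hh : h ∈ Sp p Eg) : g * h ∈ Sp p (Dg + Eg) := by
  classical
  induction hg using Submodule.span_induction with
  | mem x hx =>
    obtain ⟨T, hT, rfl⟩ := hx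
    induction hh using Submodule.span_induction with
    | mem y hy =>
      obtain ⟨T', hT', rfl⟩ := hy
      rw [mono_mul_mono]
      exact mono_mem p ((Finset.card_union_le _ _).trans (Nat.add_le_add hT hT'))
    | zero => rw [mul_zero]; exact Submodule.zero_mem _
    | add y z _ _ hy hz => rw [mul_add]; exact Submodule.add_mem _ hy hz
    | smul r y _ hy => rw [mul_smul_comm]; exact Submodule.smul_mem _ r hy
  | zero => rw [zero_mul]; exact Submodule.zero_mem _
  | add x y _ _ hx hy => rw [add_mul]; exact Submodule.add_mem _ hx hy
  | smul r x _ hx => rw [smul_mul_assoc]; exact Submodule.smul_mem _ r hx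

lemma pow_mem_Sp {Dg : ℕ} {g : Finset (Fin n) → ZMod p} (hg : g ∈ Sp p Dg) :
    ∀ m : ℕ, g ^ m ∈ Sp p (m * Dg)
  | 0 => by rw [pow_zero]; exact one_mem_Sp p _
  | (m + 1) => by
      rw [pow_succ, Nat.succ_mul]
      exact mul_mem_Sp p (pow_mem_Sp hg m) hg

lemma prod_mem_Sp {ι : Type*} (s : Finset ι) (F : ι → Finset (Fin n) → ZMod p) (b : ι → ℕ)
    (hF : ∀ i ∈ s, F i ∈ Sp p (b i)) : (∏ i ∈ s, F i) ∈ Sp p (∑ i ∈ s, b i) := by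
  classical
  induction s using Finset.cons_induction with
  | empty => simpa using one_mem_Sp p 0
  | cons a s ha ih =>
    rw [Finset.prod_cons, Finset.sum_cons]
    exact mul_mem_Sp p (hF a (Finset.mem_cons_self a s))
      (ih fun i hi => hF i (Finset.mem_cons_of_mem hi))

lemma mob_zero_fun {M : Type*} [AddCommGroup M] (T : Finset (Fin n)) :
    mob (0 : Finset (Fin n) → M) T = 0 := by
  rw [mob_def]; simp

lemma mob_add {M : Type*} [AddCommGroup M] (G G' : Finset (Fin n) → M) (T : Finset (Fin n)) :
    mob (G + G') T = mob G T + mob G' T := by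
  simp [mob_def, smul_add, Finset.sum_add_distrib]

lemma mob_smul (r : ZMod p) (G : Finset (Fin n) → ZMod p) (T : Finset (Fin n)) :
    mob (r • G) T = r • mob G T := by
  simp only [mob_def, Finset.smul_sum, Pi.smul_apply]
  exact Finset.sum_congr rfl fun U _ => smul_comm _ r _

lemma mob_mono_univ {T : Finset (Fin n)} (hT : T ≠ Finset.univ) :
    mob (mono p T) (Finset.univ : Finset (Fin n)) = 0 := by
  classical
  have : ∃ a, a ∉ T := by
    by_contra hcon
    push_neg at hcon
    exact hT (Finset.eq_univ_iff_forall.mpr hcon)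
  obtain ⟨a, ha⟩ := this
  have h1 : (Finset.univ : Finset (Fin n)) = insert a (Finset.univ.erase a) :=
    (Finset.insert_erase (Finset.mem_univ a)).symm
  rw [h1, mob_insert _ (Finset.notMem_erase a _)]
  have h2 : (fun U => mono p T (insert a U) - mono p T U) = (0 : Finset (Fin n) → ZMod p) := by
    funext U
    have : T ⊆ insert a U ↔ T ⊆ U := by
      constructor
      · intro h i hi
        rcases Finset.mem_insert.mp (h hi) with rfl | h'
        · exact absurd hi ha
        · exact h'
      · intro h; exact h.trans (Finset.subset_insert a U)
    simp [mono, this]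
  rw [h2, mob_zero_fun]

lemma mob_vanish {Dg : ℕ} (hD : Dg < n) {G : Finset (Fin n) → ZMod p} (hG : G ∈ Sp p Dg) :
    mob G (Finset.univ : Finset (Fin n)) = 0 := by
  induction hG using Submodule.span_induction with
  | mem x hx =>
    obtain ⟨T, hT, rfl⟩ := hx
    refine mob_mono_univ p (fun hcon => ?_)
    rw [hcon] at hT
    simp [Finset.card_univ] at hT
    omega
  | zero => exact mob_zero_fun _
  | add x y _ _ hx hy => rw [mob_add]; rw [hx, hy]; simp
  | smul r x _ hx => rw [mob_smul, hx, smul_zero]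

/-- The function `S ↦ choose (∑_{T ∈ 𝒜, T ⊆ S} ℓ T) N mod p` has monomial degree `≤ N·Dg`. -/
lemma choose_sum_mem_Sp (ℓ : Finset (Fin n) → ℕ) (Dg : ℕ)
    (hℓ : ∀ T, ℓ T ≠ 0 → T.card ≤ Dg) (𝒜 : Finset (Finset (Fin n))) :
    ∀ N : ℕ,
      (fun S : Finset (Fin n) =>
          ((Nat.choose (∑ T ∈ 𝒜, ℓ T * (if T ⊆ S then 1 else 0)) N : ℕ) : ZMod p))
        ∈ Sp p (N * Dg) := by
  classical
  induction 𝒜 using Finset.induction_on with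
  | empty =>
    intro N
    match N with
    | 0 => simpa [Pi.one_def] using one_mem_Sp p 0
    | (N + 1) =>
      have : (fun S : Finset (Fin n) =>
          ((Nat.choose (∑ T ∈ (∅ : Finset (Finset (Fin n))), ℓ T * (if T ⊆ S then 1 else 0))
            (N + 1) : ℕ) : ZMod p)) = (0 : Finset (Fin n) → ZMod p) := by
        funext S; simp
      rw [this]
      exact Submodule.zero_mem _
  | insert T₀ 𝒜 hT₀ ih =>
    intro N
    have key : (fun S : Finset (Fin n) =>
        ((Nat.choose (∑ T ∈ insert T₀ 𝒜, ℓ T * (if T ⊆ S then 1 else 0)) N : ℕ) : ZMod p))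
        = ∑ ij ∈ Finset.HasAntidiagonal.antidiagonal N,
            (fun S : Finset (Fin n) =>
              ((Nat.choose (ℓ T₀ * (if T₀ ⊆ S then 1 else 0)) ij.1 : ℕ) : ZMod p)) *
            (fun S : Finset (Fin n) =>
              ((Nat.choose (∑ T ∈ 𝒜, ℓ T * (if T ⊆ S then 1 else 0)) ij.2 : ℕ) : ZMod p)) := by
      funext S
      rw [Finset.sum_apply]
      simp only [Pi.mul_apply]
      rw [Finset.sum_insert hT₀, Nat.add_choose_eq]
      push_cast
      rfl
    rw [key]
    apply Submodule.sum_mem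
    rintro ⟨i, j⟩ hij
    have hij' : i + j = N := Finset.HasAntidiagonal.mem_antidiagonal.mp hij
    have h2 := ih j
    have h1 : (fun S : Finset (Fin n) =>
        ((Nat.choose (ℓ T₀ * (if T₀ ⊆ S then 1 else 0)) i : ℕ) : ZMod p)) ∈ Sp p (i * Dg) := by
      match i with
      | 0 => simpa [Pi.one_def] using one_mem_Sp p 0
      | (i + 1) =>
        by_cases hz : ℓ T₀ = 0
        · have : (fun S : Finset (Fin n) =>
              ((Nat.choose (ℓ T₀ * (if T₀ ⊆ S then 1 else 0)) (i + 1) : ℕ) : ZMod p))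
              = (0 : Finset (Fin n) → ZMod p) := by
            funext S; simp [hz]
          rw [this]; exact Submodule.zero_mem _
        · have heq : (fun S : Finset (Fin n) =>
              ((Nat.choose (ℓ T₀ * (if T₀ ⊆ S then 1 else 0)) (i + 1) : ℕ) : ZMod p))
              = ((Nat.choose (ℓ T₀) (i + 1) : ℕ) : ZMod p) • mono p T₀ := by
            funext S
            rw [Pi.smul_apply]
            show _ = _ • (if T₀ ⊆ S then (1 : ZMod p) else 0)
            by_cases h : T₀ ⊆ S
            · simp [h]
            · simp [h]
          rw [heq]
          refine Submodule.smul_mem _ _ (Sp_mono p ?_ (mono_mem p (hℓ T₀ hz)))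
          calc Dg = 1 * Dg := (one_mul Dg).symm
          _ ≤ (i + 1) * Dg := Nat.mul_le_mul_right Dg (by omega)
    have := mul_mem_Sp p h1 h2
    rw [← Nat.add_mul, hij'] at this
    exact this

/-- Lucas: `choose c (p^j) ≡ digit_j(c) mod p`. -/
lemma cast_choose_pow {p : ℕ} [Fact p.Prime] (j c : ℕ) :
    ((Nat.choose c (p ^ j) : ℕ) : ZMod p) = ((c / p ^ j : ℕ) : ZMod p) := by
  induction j generalizing c with
  | zero => simp [Nat.choose_one_right]
  | succ j ih =>
    have hp : 1 < p := (Fact.out : p.Prime).one_lt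
    have h := Choose.choose_modEq_choose_mod_mul_choose_div (p := p) (n := c) (k := p ^ (j + 1))
    have h' : ((Nat.choose c (p ^ (j + 1)) : ℕ) : ZMod p)
        = ((Nat.choose (c % p) (p ^ (j + 1) % p) * Nat.choose (c / p) (p ^ (j + 1) / p) : ℕ)
            : ZMod p) := by
      have := (ZMod.intCast_eq_intCast_iff _ _ _).mpr h
      push_cast at this ⊢
      exact_mod_cast this
    have hmod : p ^ (j + 1) % p = 0 := by
      rw [pow_succ]
      exact Nat.mul_mod_left _ _
    have hdiv : p ^ (j + 1) / p = p ^ j := by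
      rw [pow_succ]
      exact Nat.mul_div_cancel _ (by omega)
    rw [h', hmod, hdiv, Nat.choose_zero_right, one_mul, ih (c / p),
      Nat.div_div_eq_div_mul, ← pow_succ']

/-- `p^k ∣ c` iff all base-`p` digits below `k` vanish. -/
lemma pow_dvd_iff_digits {p : ℕ} (c : ℕ) :
    ∀ k : ℕ, p ^ k ∣ c ↔ ∀ j < k, p ∣ c / p ^ j := by
  intro k
  induction k with
  | zero => simp
  | succ k ih =>
    constructor
    · intro h j hj
      have hjd : p ^ (j + 1) ∣ c := (pow_dvd_pow p (by omega)).trans h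
      have hj' : p ^ j ∣ c := (pow_dvd_pow p (by omega)).trans h
      rw [Nat.dvd_div_iff_mul_dvd hj', ← pow_succ]
      exact hjd
    · intro h
      have hk : p ^ k ∣ c := ih.mpr fun j hj => h j (by omega)
      have := (Nat.dvd_div_iff_mul_dvd hk).mp (h k (by omega))
      rwa [← pow_succ] at this

/-- `t ↦ t/q mod 1` as an additive hom `ℤ →+ ℝ/ℤ`. -/
noncomputable def tmap (q : ℝ) : ℤ →+ AddCircle (1 : ℝ) :=
  AddMonoidHom.mk' (fun t => (((t : ℝ) / q : ℝ) : AddCircle (1 : ℝ)))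
    (by
      intro a b
      push_cast [add_div]
      rfl)

lemma tmap_apply (q : ℝ) (t : ℤ) : tmap q t = (((t : ℝ) / q : ℝ) : AddCircle (1 : ℝ)) := rfl

lemma tmap_eq_zero_iff {p k : ℕ} (hp : 0 < p) (t : ℤ) :
    tmap ((p : ℝ) ^ k) t = 0 ↔ ((p ^ k : ℕ) : ℤ) ∣ t := by
  have hq : ((p : ℝ) ^ k) ≠ 0 := by positivity
  rw [tmap_apply, AddCircle.coe_eq_zero_iff]
  constructor
  · rintro ⟨z, hz⟩
    refine ⟨z, ?_⟩
    have : (t : ℝ) = (z : ℝ) * (p : ℝ) ^ k := by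
      field_simp at hz
      rw [zsmul_eq_mul, mul_one] at hz
      linarith [hz]
    have h2 : ((t : ℤ) : ℝ) = (((p ^ k : ℕ) : ℤ) * z : ℤ) := by
      push_cast
      linarith [this]
    exact_mod_cast h2
  · rintro ⟨z, rfl⟩
    refine ⟨z, ?_⟩
    rw [zsmul_eq_mul, mul_one]
    push_cast
    field_simp

lemma geom_aux (p : ℕ) (hp : 1 ≤ p) : ∀ k : ℕ, (p - 1) * (∑ j ∈ range k, p ^ j) + 1 = p ^ k
  | 0 => by simp
  | (k + 1) => by
    obtain ⟨q, rfl⟩ : ∃ q, p = q + 1 := ⟨p - 1, by omega⟩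
    have ih := geom_aux (q + 1) hp k
    rw [Finset.sum_range_succ, Nat.mul_add, pow_succ]
    simp only [Nat.add_sub_cancel] at ih ⊢
    nlinarith [ih]

end Stmt13Aux

open Stmt13Aux in
/-- A nonclassical polynomial of degree `d` and values in `(1/p^k)ℤ/ℤ` on the
hypercube, vanishing at `0`, has another Boolean root once `n > (p^k-1)d`. -/
theorem stmt13 (p n d k : ℕ) [Fact p.Prime]
    (f : (Fin n → ZMod p) → AddCircle (1 : ℝ))
    (hdeg : IsNCPoly d f)
    (hval : ∀ x : Fin n → ZMod p, IsBool x →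
      ∃ m : ℤ, f x = ((((m : ℝ) / p ^ k : ℝ)) : AddCircle (1 : ℝ)))
    (h0 : f 0 = 0) (hn : (p ^ k - 1) * d < n) :
    ∃ x : Fin n → ZMod p, IsBool x ∧ x ≠ 0 ∧ f x = 0 := by
  classical
  by_contra hcon
  push_neg at hcon
  have hp1 : 1 < p := (Fact.out : p.Prime).one_lt
  haveI : Fact (1 < p) := ⟨hp1⟩
  have hp0 : 0 < p := by omega
  set q : ℤ := ((p ^ k : ℕ) : ℤ) with hqdef
  have hq0 : q ≠ 0 := by
    rw [hqdef]
    exact_mod_cast (pow_pos hp0 k).ne'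
  -- numerators on the cube
  have hval' : ∀ S : Finset (Fin n), ∃ mz : ℤ, f (bvec p S) = tmap ((p : ℝ) ^ k) mz := by
    intro S
    obtain ⟨mz, hmz⟩ := hval _ (isBool_bvec p S)
    exact ⟨mz, by rw [hmz, tmap_apply]⟩
  choose m hm using hval'
  -- vanishing of high Möbius coefficients
  have hdvd : ∀ T : Finset (Fin n), d + 1 ≤ T.card → q ∣ mob m T := by
    intro T hT
    have h1 : tmap ((p : ℝ) ^ k) (mob m T) = mob (fun U => tmap ((p : ℝ) ^ k) (m U)) T := by
      rw [mob_def, mob_def, map_sum]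
      exact Finset.sum_congr rfl fun U _ => map_zsmul _ _ _
    have h2 : mob (fun U => tmap ((p : ℝ) ^ k) (m U)) T = mob (fun U => f (bvec p U)) T :=
      mob_congr fun U _ => (hm U).symm
    have h3 : mob (fun U => f (bvec p U)) T = 0 :=
      mob_comp_bvec_eq_zero T f fun hs hlen => foldr_eq_zero_of_le hdeg T.card hT hs hlen
    have h4 : tmap ((p : ℝ) ^ k) (mob m T) = 0 := by rw [h1, h2, h3]
    exact (tmap_eq_zero_iff hp0 _).mp h4
  -- integer coefficients and the counting function c
  set ℓ : Finset (Fin n) → ℕ := fun T => if T.card ≤ d then ((mob m T) % q).toNat else 0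
    with hℓdef
  have hℓcard : ∀ T, ℓ T ≠ 0 → T.card ≤ d := by
    intro T h
    by_contra hc
    simp [hℓdef, hc] at h
  set c : Finset (Fin n) → ℕ := fun S => ∑ T ∈ S.powerset, ℓ T with hcdef
  have hcmod : ∀ S, q ∣ ((c S : ℤ) - m S) := by
    intro S
    have hminv : (∑ T ∈ S.powerset, mob m T) = m S := mob_sum S m
    have hsplit : (c S : ℤ) - m S = ∑ T ∈ S.powerset, ((ℓ T : ℤ) - mob m T) := by
      rw [Finset.sum_sub_distrib, ← hminv, hcdef]
      push_cast
      ring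
    rw [hsplit]
    apply Finset.dvd_sum
    intro T hT
    by_cases hTd : T.card ≤ d
    · have hval : (ℓ T : ℤ) = (mob m T) % q := by
        simp [hℓdef, hTd, Int.toNat_of_nonneg (Int.emod_nonneg _ hq0)]
      rw [hval, Int.emod_def]
      exact ⟨-(mob m T / q), by ring⟩
    · have hz : (ℓ T : ℤ) = 0 := by simp [hℓdef, hTd]
      rw [hz, zero_sub]
      exact (hdvd T (by omega)).neg_right
  have hiff : ∀ S, (f (bvec p S) = 0 ↔ p ^ k ∣ c S) := by
    intro S
    rw [hm S, tmap_eq_zero_iff hp0]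
    show q ∣ m S ↔ p ^ k ∣ c S
    constructor
    · intro h
      have h2 : q ∣ (c S : ℤ) := by
        have h3 := dvd_add (hcmod S) h
        have h4 : (c S : ℤ) - m S + m S = (c S : ℤ) := by ring
        rwa [h4] at h3
      exact Int.natCast_dvd_natCast.mp
        (show ((p ^ k : ℕ) : ℤ) ∣ ((c S : ℕ) : ℤ) from h2)
    · intro h
      have h' : q ∣ (c S : ℤ) :=
        show ((p ^ k : ℕ) : ℤ) ∣ ((c S : ℕ) : ℤ) from Int.natCast_dvd_natCast.mpr h
      have h2 := dvd_sub h' (hcmod S)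
      have h3 : (c S : ℤ) - ((c S : ℤ) - m S) = m S := by ring
      rwa [h3] at h2
  -- digit functions are low degree
  have hcform : ∀ S, c S = ∑ T ∈ (Finset.univ : Finset (Finset (Fin n))),
      ℓ T * (if T ⊆ S then 1 else 0) := by
    intro S
    have h1 : ∀ T : Finset (Fin n), ℓ T * (if T ⊆ S then 1 else 0)
        = if T ⊆ S then ℓ T else 0 := by
      intro T
      by_cases h : T ⊆ S <;> simp [h]
    symm
    calc ∑ T ∈ (Finset.univ : Finset (Finset (Fin n))), ℓ T * (if T ⊆ S then 1 else 0)
        = ∑ T ∈ (Finset.univ : Finset (Finset (Fin n))), (if T ⊆ S then ℓ T else 0) :=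
          Finset.sum_congr rfl fun T _ => h1 T
      _ = ∑ T ∈ Finset.univ.filter (fun T => T ⊆ S), ℓ T := (Finset.sum_filter _ _).symm
      _ = ∑ T ∈ S.powerset, ℓ T := by
          congr 1
          ext T
          simp [Finset.mem_powerset]
      _ = c S := rfl
  set gd : ℕ → Finset (Fin n) → ZMod p := fun j S => ((c S / p ^ j : ℕ) : ZMod p) with hgddef
  have hgdmem : ∀ j, gd j ∈ Sp p (p ^ j * d) := by
    intro j
    have h1 := choose_sum_mem_Sp p ℓ d hℓcard Finset.univ (p ^ j)
    have h2 : (fun S : Finset (Fin n) =>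
        ((Nat.choose (∑ T ∈ Finset.univ, ℓ T * (if T ⊆ S then 1 else 0)) (p ^ j) : ℕ) : ZMod p))
        = gd j := by
      funext S
      rw [← hcform S, cast_choose_pow]
    rwa [h2] at h1
  -- the indicator of `p^k ∣ c S`
  set ind : Finset (Fin n) → ZMod p :=
    ∏ j ∈ Finset.range k, ((1 : Finset (Fin n) → ZMod p) - gd j ^ (p - 1)) with hinddef
  have hindmem : ind ∈ Sp p ((p ^ k - 1) * d) := by
    have hmem := prod_mem_Sp p (Finset.range k)
      (fun j => (1 : Finset (Fin n) → ZMod p) - gd j ^ (p - 1))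
      (fun j => (p - 1) * (p ^ j * d))
      (fun j _ => Submodule.sub_mem _ (one_mem_Sp p _) (pow_mem_Sp p (hgdmem j) (p - 1)))
    have harith : (∑ j ∈ Finset.range k, (p - 1) * (p ^ j * d)) = (p ^ k - 1) * d := by
      have hg := geom_aux p (by omega) k
      calc (∑ j ∈ Finset.range k, (p - 1) * (p ^ j * d))
          = (∑ j ∈ Finset.range k, ((p - 1) * p ^ j) * d) := by
            exact Finset.sum_congr rfl fun j _ => by ring
        _ = (∑ j ∈ Finset.range k, (p - 1) * p ^ j) * d := by rw [Finset.sum_mul]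
        _ = ((p - 1) * ∑ j ∈ Finset.range k, p ^ j) * d := by rw [Finset.mul_sum]
        _ = (p ^ k - 1) * d := by
            congr 1
            omega
    rw [← harith, hinddef]
    exact hmem
  have hindval : ∀ S, ind S = if p ^ k ∣ c S then 1 else 0 := by
    intro S
    rw [hinddef, Finset.prod_apply]
    by_cases hdv : p ^ k ∣ c S
    · rw [if_pos hdv]
      apply Finset.prod_eq_one
      intro j hj
      have hpd : p ∣ c S / p ^ j :=
        (pow_dvd_iff_digits (c S) k).mp hdv j (Finset.mem_range.mp hj)
      have hz : gd j S = 0 := (ZMod.natCast_eq_zero_iff _ _).mpr hpd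
      simp [hz, zero_pow (show p - 1 ≠ 0 by omega)]
    · rw [if_neg hdv]
      obtain ⟨j, hj, hpd⟩ : ∃ j, j < k ∧ ¬ p ∣ c S / p ^ j := by
        by_contra hcc
        push_neg at hcc
        exact hdv ((pow_dvd_iff_digits (c S) k).mpr hcc)
      apply Finset.prod_eq_zero (Finset.mem_range.mpr hj)
      have hnz : gd j S ≠ 0 := fun h0 => hpd ((ZMod.natCast_eq_zero_iff _ _).mp h0)
      simp [ZMod.pow_card_sub_one_eq_one hnz]
  -- evaluate the full Möbius coefficient two ways
  have hS0 : ∀ S : Finset (Fin n), S ≠ ∅ → ind S = 0 := by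
    intro S hS
    have hb : bvec p S ≠ 0 := by
      obtain ⟨a, haS⟩ := Finset.nonempty_iff_ne_empty.mpr hS
      intro hz
      have := congrFun hz a
      simp [bvec, haS] at this
    have hf := hcon (bvec p S) (isBool_bvec p S) hb
    rw [hindval S, if_neg fun hd => hf ((hiff S).mpr hd)]
  have hSe : ind ∅ = 1 := by
    rw [hindval ∅, if_pos ((hiff ∅).mp (by rw [bvec_empty]; exact h0))]
  have hzero : mob ind (Finset.univ : Finset (Fin n)) = 0 := mob_vanish p hn hindmem
  have hne : mob ind (Finset.univ : Finset (Fin n)) = (-1 : ℤ) ^ n • (1 : ZMod p) := by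
    rw [mob_def]
    rw [Finset.sum_eq_single_of_mem ∅ (Finset.mem_powerset.mpr (Finset.empty_subset _))
      (fun U _ hU => by rw [hS0 U hU, smul_zero])]
    rw [hSe, Finset.card_univ, Fintype.card_fin, Finset.card_empty, Nat.sub_zero]
  rw [hzero] at hne
  have hcontra : ((-1 : ℤ) ^ n • (1 : ZMod p)) ≠ 0 := by
    rw [zsmul_eq_mul, mul_one]
    push_cast
    exact pow_ne_zero n (neg_ne_zero.mpr one_ne_zero)
  exact hcontra hne.symm
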